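/- Let R be a Noetherian local ring, a, c ∈ R, and E a finitely generated R-module such that E/(a c)E has finite length. If K_a, K_c, K_{ac} denote the two-term complexes E → E given by multiplication by a, c, ac respectively, then χ(K_{ac}) = χ(K_a) + χ(K_c), i.e. L(E/acE) − L(ann_E(ac)) = L(E/aE) − L(ann_E(a)) + L(E/cE) − L(ann_E(c)). -/

import Mathlib

/-- The length of a module: the supremum of lengths of strictly increasing chains of
submodules, i.e. the Krull dimension of the submodule lattice. -/
noncomputable def moduleLength (R M : Type*) [Ring R] [AddCommGroup M] [Module R M] : ℕ∞ :=
  WithBot.unbotD 0 (Order.krullDim (Submodule R M))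

open LinearMap

section Aux

variable {R M N : Type*} [Ring R] [AddCommGroup M] [Module R M]
  [AddCommGroup N] [Module R N]

lemma moduleLength_eq_height :
    moduleLength R M = Order.height (⊤ : Submodule R M) := by
  rw [moduleLength, ← Order.height_top_eq_krullDim, WithBot.unbotD_coe]

lemma moduleLength_congr (e : M ≃ₗ[R] N) : moduleLength R M = moduleLength R N := by
  unfold moduleLength
  rw [Order.krullDim_eq_of_orderIso (Submodule.orderIsoMapComap e)]

lemma enat_add_le_of_forall {a b c : ℕ∞}
    (h : ∀ n m : ℕ, (n : ℕ∞) ≤ a → (m : ℕ∞) ≤ b → (n : ℕ∞) + (m : ℕ∞) ≤ c) :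
    a + b ≤ c := by
  rcases eq_or_ne c ⊤ with rfl | hc
  · exact le_top
  lift c to ℕ using hc
  have ha : a ≠ ⊤ := by
    rintro rfl
    have := h (c + 1) 0 le_top (by simp)
    rw [Nat.cast_zero, add_zero] at this
    exact absurd (by exact_mod_cast this : c + 1 ≤ c) (by omega)
  have hb : b ≠ ⊤ := by
    rintro rfl
    have := h 0 (c + 1) (by simp) le_top
    rw [Nat.cast_zero, zero_add] at this
    exact absurd (by exact_mod_cast this : c + 1 ≤ c) (by omega)
  lift a to ℕ using ha; lift b to ℕ using hb
  exact_mod_cast h a b le_rfl le_rfl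

/-- Additivity of module length over a submodule and its quotient. -/
lemma moduleLength_add_of_submodule (N : Submodule R M) :
    moduleLength R M = moduleLength R N + moduleLength R (M ⧸ N) := by
  simp only [moduleLength_eq_height]
  apply le_antisymm
  · -- key: any chain is bounded by the sum of heights of the two projections
    have key : ∀ p : LTSeries (Submodule R M),
        (p.length : ℕ∞) ≤ Order.height (Submodule.comap N.subtype p.last)
          + Order.height (Submodule.map N.mkQ p.last) := by
      suffices H : ∀ (n : ℕ) (p : LTSeries (Submodule R M)), p.length = n →
          (p.length : ℕ∞) ≤ Order.height (Submodule.comap N.subtype p.last)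
            + Order.height (Submodule.map N.mkQ p.last) by
        intro p; exact H p.length p rfl
      intro n
      induction n with
      | zero => intro p hn; rw [hn]; simp
      | succ n ih =>
        intro p hn
        have hlast : p.eraseLast.last < p.last :=
          p.eraseLast_last_rel_last (by omega)
        have hlen : p.eraseLast.length = n := by
          simp [RelSeries.eraseLast, hn]
        have IH := ih p.eraseLast hlen
        rw [hlen] at IH
        rw [hn]
        set P := p.eraseLast.last with hP
        set Q := p.last with hQ
        have hst : Submodule.comap N.subtype P < Submodule.comap N.subtype Q
            ∨ Submodule.map N.mkQ P < Submodule.map N.mkQ Q := by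
          by_contra hcon
          push_neg at hcon
          obtain ⟨h1, h2⟩ := hcon
          have e1 : Submodule.comap N.subtype P = Submodule.comap N.subtype Q :=
            ((Submodule.comap_mono hlast.le).lt_or_eq).resolve_left h1
          have e2 : Submodule.map N.mkQ P = Submodule.map N.mkQ Q :=
            ((Submodule.map_mono hlast.le).lt_or_eq).resolve_left h2
          have e1' : N ⊓ P = N ⊓ Q := by
            have := congrArg (Submodule.map N.subtype) e1
            rwa [Submodule.map_comap_subtype, Submodule.map_comap_subtype] at this
          have e2' : P ⊔ N = Q ⊔ N := by
            have := congrArg (Submodule.comap N.mkQ) e2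
            rwa [Submodule.comap_map_mkQ, Submodule.comap_map_mkQ,
              sup_comm N P, sup_comm N Q] at this
          have hQP : Q = P := by
            calc Q = (Q ⊔ N) ⊓ Q := by rw [inf_eq_right.mpr le_sup_left]
            _ = (P ⊔ N) ⊓ Q := by rw [e2']
            _ = P ⊔ (N ⊓ Q) := sup_inf_assoc_of_le N hlast.le
            _ = P ⊔ (N ⊓ P) := by rw [← e1']
            _ = P := sup_eq_left.mpr inf_le_right
          exact absurd hQP (ne_of_gt hlast)
        have mono1 : Order.height (Submodule.comap N.subtype P)
            ≤ Order.height (Submodule.comap N.subtype Q) :=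
          Order.height_mono (Submodule.comap_mono hlast.le)
        have mono2 : Order.height (Submodule.map N.mkQ P)
            ≤ Order.height (Submodule.map N.mkQ Q) :=
          Order.height_mono (Submodule.map_mono hlast.le)
        have hcast : ((n + 1 : ℕ) : ℕ∞) = (n : ℕ∞) + 1 := by push_cast; ring
        rw [hcast]
        rcases hst with hs | hs
        · rcases eq_or_ne (Order.height (Submodule.comap N.subtype Q)) ⊤ with ht | ht
          · rw [ht, top_add]; exact le_top
          · have hlt : Order.height (Submodule.comap N.subtype P)
                < Order.height (Submodule.comap N.subtype Q) :=
              Order.height_strictMono hs (lt_of_le_of_lt mono1 (lt_top_iff_ne_top.mpr ht))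
            have h1 : Order.height (Submodule.comap N.subtype P) + 1
                ≤ Order.height (Submodule.comap N.subtype Q) :=
              (ENat.add_one_le_iff (ne_top_of_lt hlt)).mpr hlt
            calc (n : ℕ∞) + 1
                ≤ (Order.height (Submodule.comap N.subtype P)
                  + Order.height (Submodule.map N.mkQ P)) + 1 := by
                  exact add_le_add IH le_rfl
              _ = (Order.height (Submodule.comap N.subtype P) + 1)
                  + Order.height (Submodule.map N.mkQ P) := by ring
              _ ≤ _ := add_le_add h1 mono2
        · rcases eq_or_ne (Order.height (Submodule.map N.mkQ Q)) ⊤ with ht | ht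
          · rw [ht, add_top]; exact le_top
          · have hlt : Order.height (Submodule.map N.mkQ P)
                < Order.height (Submodule.map N.mkQ Q) :=
              Order.height_strictMono hs (lt_of_le_of_lt mono2 (lt_top_iff_ne_top.mpr ht))
            have h1 : Order.height (Submodule.map N.mkQ P) + 1
                ≤ Order.height (Submodule.map N.mkQ Q) :=
              (ENat.add_one_le_iff (ne_top_of_lt hlt)).mpr hlt
            calc (n : ℕ∞) + 1
                ≤ (Order.height (Submodule.comap N.subtype P)
                  + Order.height (Submodule.map N.mkQ P)) + 1 := by
                  exact add_le_add IH le_rfl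
              _ = Order.height (Submodule.comap N.subtype P)
                  + (Order.height (Submodule.map N.mkQ P) + 1) := by ring
              _ ≤ _ := add_le_add mono1 h1
    apply Order.height_le
    intro p hp
    have := key p
    rwa [hp, Submodule.comap_top, Submodule.map_top, Submodule.range_mkQ] at this
  · apply enat_add_le_of_forall
    intro n m hn hm
    obtain ⟨p, hp_last, hp_len⟩ := Order.exists_series_of_le_height _ hn
    obtain ⟨q, hq_last, hq_len⟩ := Order.exists_series_of_le_height _ hm
    let p' : LTSeries (Submodule R M) :=
      p.map (Submodule.map N.subtype) (Submodule.map_strictMono_of_injective N.injective_subtype)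
    let q' : LTSeries (Submodule R M) :=
      q.map (Submodule.comap N.mkQ) (Submodule.comap_strictMono_of_surjective N.mkQ_surjective)
    have hp'len : p'.length = n := by simpa [p'] using hp_len
    have hq'len : q'.length = m := by simpa [q'] using hq_len
    have hple : p'.last ≤ q'.head := by
      have h1 : p'.last = N := by
        show Submodule.map N.subtype p.last = N
        rw [hp_last, Submodule.map_top, Submodule.range_subtype]
      rw [h1]
      exact Submodule.le_comap_mkQ N _
    rcases hple.lt_or_eq with hlt | heq
    · have hle := Order.length_le_height (p := p'.append q' hlt)
        (x := (⊤ : Submodule R M)) le_top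
      have hlen : (p'.append q' hlt).length = n + m + 1 := by
        simp [RelSeries.append, hp'len, hq'len]
      rw [hlen] at hle
      refine le_trans ?_ hle
      push_cast
      have : (n : ℕ∞) + m ≤ (n : ℕ∞) + m + 1 := le_self_add
      exact this
    · have hle := Order.length_le_height (p := p'.smash q' heq)
        (x := (⊤ : Submodule R M)) le_top
      have hlen : (p'.smash q' heq).length = n + m := by
        simp [RelSeries.smash, hp'len, hq'len]
      rw [hlen] at hle
      refine le_trans ?_ hle
      push_cast
      exact le_rfl

end Aux

section Artinian

variable {R E : Type*} [CommRing R] [AddCommGroup E] [Module R E]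

lemma isArtinian_quot_of_le {p q : Submodule R E} (hpq : p ≤ q)
    [IsArtinian R (E ⧸ p)] : IsArtinian R (E ⧸ q) := by
  have hsurj : Function.Surjective (Submodule.mapQ p q LinearMap.id hpq) := by
    intro x
    obtain ⟨y, rfl⟩ := Submodule.mkQ_surjective q x
    exact ⟨Submodule.Quotient.mk y, by simp [Submodule.mapQ_apply]⟩
  exact isArtinian_of_surjective _ _ hsurj

lemma isArtinian_quot_smul_pow (x : R)
    [hA : IsArtinian R (E ⧸ range (LinearMap.lsmul R E x))] (n : ℕ) :
    IsArtinian R (E ⧸ range (LinearMap.lsmul R E (x ^ n))) := by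
  induction n with
  | zero =>
    have htop : range (LinearMap.lsmul R E (x ^ 0)) = ⊤ := by
      rw [eq_top_iff]
      rintro e -
      exact ⟨e, by simp⟩
    have : Subsingleton (E ⧸ range (LinearMap.lsmul R E (x ^ 0))) :=
      Submodule.Quotient.subsingleton_iff.mpr htop
    infer_instance
  | succ n ih =>
    set p := range (LinearMap.lsmul R E (x ^ (n + 1))) with hp
    have hle : p ≤ range (LinearMap.lsmul R E (x ^ n)) := by
      rintro _ ⟨y, rfl⟩
      refine ⟨x • y, ?_⟩
      show x ^ n • (x • y) = x ^ (n + 1) • y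
      rw [smul_smul, ← pow_succ]
    have hle1 : range (LinearMap.lsmul R E x) ≤ ker (p.mkQ ∘ₗ LinearMap.lsmul R E (x ^ n)) := by
      rintro _ ⟨y, rfl⟩
      simp only [mem_ker, coe_comp, Function.comp_apply, lsmul_apply]
      rw [Submodule.mkQ_apply, Submodule.Quotient.mk_eq_zero]
      refine ⟨y, ?_⟩
      show (x ^ (n + 1)) • y = x ^ n • (x • y)
      rw [smul_smul, ← pow_succ]
    let u := Submodule.liftQ (range (LinearMap.lsmul R E x)) _ hle1
    let v := Submodule.mapQ p (range (LinearMap.lsmul R E (x ^ n))) LinearMap.id hle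
    have huv : range u = ker v := by
      have hru : range u = Submodule.map p.mkQ (range (LinearMap.lsmul R E (x ^ n))) := by
        rw [Submodule.range_liftQ, range_comp]
      have hcomp : v ∘ₗ p.mkQ = (range (LinearMap.lsmul R E (x ^ n))).mkQ := by
        ext y
        simp [v, Submodule.mapQ_apply]
      have hker : Submodule.comap p.mkQ (ker v) = range (LinearMap.lsmul R E (x ^ n)) := by
        rw [← ker_comp, hcomp, Submodule.ker_mkQ]
      rw [hru]
      conv_rhs => rw [← Submodule.map_comap_eq_of_surjective p.mkQ_surjective (ker v)]
      rw [hker]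
    haveI := ih
    exact isArtinian_of_range_eq_ker u v huv

lemma isArtinian_ker_smul [IsNoetherian R E] (x : R)
    [IsArtinian R (E ⧸ range (LinearMap.lsmul R E x))] :
    IsArtinian R (ker (LinearMap.lsmul R E x)) := by
  have mono : Monotone (fun n => ker (LinearMap.lsmul R E (x ^ n))) := by
    apply monotone_nat_of_le_succ
    intro n e he
    rw [mem_ker] at he ⊢
    rw [lsmul_apply] at he ⊢
    rw [pow_succ', mul_smul, he, smul_zero]
  obtain ⟨n, hn⟩ := (monotone_stabilizes_iff_noetherian.mpr inferInstance) ⟨_, mono⟩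
  have heq : ker (LinearMap.lsmul R E (x ^ n)) = ker (LinearMap.lsmul R E (x ^ (n + 1))) :=
    hn (n + 1) (Nat.le_succ n)
  haveI := isArtinian_quot_smul_pow (E := E) x n
  refine isArtinian_of_injective
    ((range (LinearMap.lsmul R E (x ^ n))).mkQ ∘ₗ (ker (LinearMap.lsmul R E x)).subtype)
    (LinearMap.ker_eq_bot.mp ?_)
  rw [ker_comp, Submodule.ker_mkQ, eq_bot_iff]
  rintro ⟨k, hk⟩ hmem
  rw [Submodule.mem_comap] at hmem
  obtain ⟨z, hz⟩ := hmem
  rw [Submodule.coe_subtype] at hz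
  rw [mem_ker, lsmul_apply] at hk
  rw [lsmul_apply] at hz
  have hz1 : z ∈ ker (LinearMap.lsmul R E (x ^ (n + 1))) := by
    rw [mem_ker, lsmul_apply, pow_succ', mul_smul, hz, hk]
  rw [← heq] at hz1
  rw [mem_ker, lsmul_apply] at hz1
  have hk0 : k = 0 := by simpa [hz1] using hz.symm
  rw [Submodule.mem_bot]
  exact Subtype.ext hk0

end Artinian

/-- For `a c : R` and a finitely generated module `E` with `E/(ac)E` of finite length,
all kernels and cokernels of multiplication by `a`, `c`, `ac` on `E` have finite length
and `χ(K_{ac}) = χ(K_a) + χ(K_c)`, i.e.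
`L(E/acE) − L(ann_E(ac)) = L(E/aE) − L(ann_E(a)) + L(E/cE) − L(ann_E(c))`
(stated additively to avoid subtraction in `ℕ∞`). -/
theorem chi_mul_add {R E : Type*} [CommRing R] [IsNoetherianRing R] [IsLocalRing R]
    [AddCommGroup E] [Module R E] [Module.Finite R E] (a c : R)
    (h : IsFiniteLength R (E ⧸ range (LinearMap.lsmul R E (a * c)))) :
    IsFiniteLength R (E ⧸ range (LinearMap.lsmul R E (a * c))) ∧
    IsFiniteLength R (ker (LinearMap.lsmul R E (a * c))) ∧
    IsFiniteLength R (E ⧸ range (LinearMap.lsmul R E a)) ∧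
    IsFiniteLength R (ker (LinearMap.lsmul R E a)) ∧
    IsFiniteLength R (E ⧸ range (LinearMap.lsmul R E c)) ∧
    IsFiniteLength R (ker (LinearMap.lsmul R E c)) ∧
    moduleLength R (E ⧸ range (LinearMap.lsmul R E (a * c)))
        + moduleLength R (ker (LinearMap.lsmul R E a))
        + moduleLength R (ker (LinearMap.lsmul R E c))
      = moduleLength R (ker (LinearMap.lsmul R E (a * c)))
        + moduleLength R (E ⧸ range (LinearMap.lsmul R E a))
        + moduleLength R (E ⧸ range (LinearMap.lsmul R E c)) := by
  haveI : IsNoetherian R E := isNoetherian_of_isNoetherianRing_of_finite R E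
  set f := LinearMap.lsmul R E a with hfdef
  set g := LinearMap.lsmul R E c with hgdef
  have hcomp : LinearMap.lsmul R E (a * c) = g ∘ₗ f := by
    ext e
    show (a * c) • e = c • (a • e)
    rw [smul_smul, mul_comm]
  -- range inclusions
  have hIh_le_If : range (LinearMap.lsmul R E (a * c)) ≤ range f := by
    rintro _ ⟨y, rfl⟩
    exact ⟨c • y, by show a • (c • y) = (a * c) • y; rw [smul_smul]⟩
  have hIh_le_Ig : range (LinearMap.lsmul R E (a * c)) ≤ range g := by
    rintro _ ⟨y, rfl⟩
    exact ⟨a • y, by show c • (a • y) = (a * c) • y; rw [smul_smul, mul_comm]⟩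
  -- Artinian instances
  obtain ⟨hNoe, hArt⟩ := isFiniteLength_iff_isNoetherian_isArtinian.mp h
  haveI := hArt
  haveI hAa : IsArtinian R (E ⧸ range f) := isArtinian_quot_of_le hIh_le_If
  haveI hAc : IsArtinian R (E ⧸ range g) := isArtinian_quot_of_le hIh_le_Ig
  haveI : IsArtinian R (ker (LinearMap.lsmul R E (a * c))) := isArtinian_ker_smul (a * c)
  haveI : IsArtinian R (ker f) := isArtinian_ker_smul a
  haveI : IsArtinian R (ker g) := isArtinian_ker_smul c
  refine ⟨h, ?_, ?_, ?_, ?_, ?_, ?_⟩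
  · exact isFiniteLength_iff_isNoetherian_isArtinian.mpr ⟨inferInstance, inferInstance⟩
  · exact isFiniteLength_iff_isNoetherian_isArtinian.mpr ⟨inferInstance, inferInstance⟩
  · exact isFiniteLength_iff_isNoetherian_isArtinian.mpr ⟨inferInstance, inferInstance⟩
  · exact isFiniteLength_iff_isNoetherian_isArtinian.mpr ⟨inferInstance, inferInstance⟩
  · exact isFiniteLength_iff_isNoetherian_isArtinian.mpr ⟨inferInstance, inferInstance⟩
  -- the length identity
  · -- Eq1 : L(ker(ac)) = L(ker f) + L(range f ⊓ ker g)
    have hKfKh : ker f ≤ ker (LinearMap.lsmul R E (a * c)) := by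
      intro e he
      rw [mem_ker] at he ⊢
      rw [hcomp]
      simp [he]
    have hφmem : ∀ e : ker (LinearMap.lsmul R E (a * c)),
        (f ∘ₗ (ker (LinearMap.lsmul R E (a * c))).subtype) e ∈ range f ⊓ ker g := by
      rintro ⟨e, he⟩
      refine ⟨⟨e, rfl⟩, ?_⟩
      show f e ∈ ker g
      have h0 : g (f e) = 0 := by
        have h1 : (g ∘ₗ f) e = 0 := by rw [← hcomp]; exact mem_ker.mp he
        simpa using h1
      exact mem_ker.mpr h0
    let φ : ↥(ker (LinearMap.lsmul R E (a * c))) →ₗ[R] ↥(range f ⊓ ker g) :=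
      codRestrict _ (f ∘ₗ (ker (LinearMap.lsmul R E (a * c))).subtype) hφmem
    have hφsurj : Function.Surjective φ := by
      rintro ⟨y, ⟨z, hz⟩, hyg⟩
      refine ⟨⟨z, ?_⟩, ?_⟩
      · rw [mem_ker, hcomp]
        show g (f z) = 0
        rw [hz]
        exact hyg
      · exact Subtype.ext hz
    have hφker : ker φ
        = Submodule.comap (ker (LinearMap.lsmul R E (a * c))).subtype (ker f) := by
      rw [ker_codRestrict, ker_comp]
    have Eq1 : moduleLength R ↥(ker (LinearMap.lsmul R E (a * c)))
        = moduleLength R ↥(ker f) + moduleLength R ↥(range f ⊓ ker g) := by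
      rw [moduleLength_add_of_submodule (ker φ)]
      have e1 : moduleLength R ↥(ker φ) = moduleLength R ↥(ker f) := by
        rw [hφker]
        exact moduleLength_congr (Submodule.comapSubtypeEquivOfLe hKfKh)
      have e2 : moduleLength R (↥(ker (LinearMap.lsmul R E (a * c))) ⧸ ker φ)
          = moduleLength R ↥(range f ⊓ ker g) :=
        moduleLength_congr (φ.quotKerEquivOfSurjective hφsurj)
      rw [e1, e2]
    -- ψ : ker g → E ⧸ range f
    let ψ : ↥(ker g) →ₗ[R] E ⧸ range f := (range f).mkQ ∘ₗ (ker g).subtype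
    have hψker : ker ψ = Submodule.comap (ker g).subtype (range f ⊓ ker g) := by
      show ker ((range f).mkQ ∘ₗ (ker g).subtype) = _
      rw [ker_comp, Submodule.ker_mkQ]
      ext ⟨e, he⟩
      simp only [Submodule.mem_comap, Submodule.coe_subtype, Submodule.mem_inf]
      exact ⟨fun hf => ⟨hf, he⟩, fun hf => hf.1⟩
    -- Eq2 : L(ker g) = L(range f ⊓ ker g) + L(ker g ⧸ ker ψ)
    have Eq2 : moduleLength R ↥(ker g)
        = moduleLength R ↥(range f ⊓ ker g) + moduleLength R (↥(ker g) ⧸ ker ψ) := by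
      rw [moduleLength_add_of_submodule (ker ψ)]
      have e1 : moduleLength R ↥(ker ψ) = moduleLength R ↥(range f ⊓ ker g) := by
        rw [hψker]
        exact moduleLength_congr (Submodule.comapSubtypeEquivOfLe inf_le_right)
      rw [e1]
    -- Eq3 : L(E ⧸ range f) = L(ker g ⧸ ker ψ) + L(E ⧸ (range f ⊔ ker g))
    have hrange_ψ : range ψ = Submodule.map (range f).mkQ (range f ⊔ ker g) := by
      show range ((range f).mkQ ∘ₗ (ker g).subtype) = _
      rw [range_comp, Submodule.range_subtype, Submodule.map_sup,
        Submodule.mkQ_map_self, bot_sup_eq]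
    have Eq3 : moduleLength R (E ⧸ range f)
        = moduleLength R (↥(ker g) ⧸ ker ψ) + moduleLength R (E ⧸ (range f ⊔ ker g)) := by
      rw [moduleLength_add_of_submodule (Submodule.map (range f).mkQ (range f ⊔ ker g))]
      have e1 : moduleLength R ↥(Submodule.map (range f).mkQ (range f ⊔ ker g))
          = moduleLength R (↥(ker g) ⧸ ker ψ) := by
        rw [← hrange_ψ]
        exact (moduleLength_congr ψ.quotKerEquivRange).symm
      have e2 : moduleLength R ((E ⧸ range f) ⧸
            Submodule.map (range f).mkQ (range f ⊔ ker g))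
          = moduleLength R (E ⧸ (range f ⊔ ker g)) :=
        moduleLength_congr (Submodule.quotientQuotientEquivQuotient _ _ le_sup_left)
      rw [e1, e2]
    -- Eq4 : L(E ⧸ range(ac)) = L(E ⧸ (range f ⊔ ker g)) + L(E ⧸ range g)
    let θ : E →ₗ[R] E ⧸ range (LinearMap.lsmul R E (a * c)) :=
      (range (LinearMap.lsmul R E (a * c))).mkQ ∘ₗ g
    have hθker : ker θ = range f ⊔ ker g := by
      show ker ((range (LinearMap.lsmul R E (a * c))).mkQ ∘ₗ g) = _
      rw [ker_comp, Submodule.ker_mkQ]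
      ext e
      simp only [Submodule.mem_comap, LinearMap.mem_range]
      constructor
      · rintro ⟨y, hy⟩
        rw [Submodule.mem_sup]
        refine ⟨a • y, ⟨y, rfl⟩, e - a • y, ?_, by abel⟩
        rw [mem_ker]
        show c • (e - a • y) = 0
        have hy' : (a * c) • y = c • e := hy
        rw [smul_sub, smul_smul, mul_comm c a, hy']
        abel
      · intro hmem
        rw [Submodule.mem_sup] at hmem
        obtain ⟨u, ⟨w, rfl⟩, v, hv, rfl⟩ := hmem
        refine ⟨w, ?_⟩
        rw [mem_ker] at hv
        show (a * c) • w = c • (a • w + v)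
        have hv' : c • v = 0 := hv
        rw [smul_add, hv', add_zero, smul_smul, mul_comm]
    have hrange_θ : range θ
        = Submodule.map (range (LinearMap.lsmul R E (a * c))).mkQ (range g) := by
      show range ((range (LinearMap.lsmul R E (a * c))).mkQ ∘ₗ g) = _
      rw [range_comp]
    have Eq4 : moduleLength R (E ⧸ range (LinearMap.lsmul R E (a * c)))
        = moduleLength R (E ⧸ (range f ⊔ ker g)) + moduleLength R (E ⧸ range g) := by
      rw [moduleLength_add_of_submodule
        (Submodule.map (range (LinearMap.lsmul R E (a * c))).mkQ (range g))]
      have e1 : moduleLength R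
            ↥(Submodule.map (range (LinearMap.lsmul R E (a * c))).mkQ (range g))
          = moduleLength R (E ⧸ (range f ⊔ ker g)) := by
        rw [← hrange_θ]
        have := moduleLength_congr θ.quotKerEquivRange
        rw [hθker] at this
        exact this.symm
      have e2 : moduleLength R ((E ⧸ range (LinearMap.lsmul R E (a * c))) ⧸
            Submodule.map (range (LinearMap.lsmul R E (a * c))).mkQ (range g))
          = moduleLength R (E ⧸ range g) :=
        moduleLength_congr (Submodule.quotientQuotientEquivQuotient _ _ hIh_le_Ig)
      rw [e1, e2]
    rw [Eq4, Eq1, Eq2, Eq3]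
    abel
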